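/- Let A be a finite-dimensional lozenge algebra with Laplacian Δ = dd* + d*d, and let 𝓗 = Ker(Δ) denote the harmonic elements. Then 𝓗⁰ := 𝓗 ∩ A⁰ is a unital subalgebra of A⁰, and 𝓗² := 𝓗 ∩ A² is a 𝓗⁰-sub-bimodule of A²: if a ∈ A⁰ and b ∈ A² are both harmonic, then ab and ba are harmonic (in particular ∂*(ab) = a·∂*(b)). Moreover L(a) = ωa and Λ restrict to mutually inverse bijections between 𝓗⁰ and 𝓗². -/
import Mathlib


/-- A lozenge algebra: a ℤ-graded unital associative ℂ-algebra `A = A⁰ ⊕ A¹ ⊕ A²`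
concentrated in degrees 0,1,2 (with `A¹ = A^{1,0} ⊕ A^{0,1}`), equipped with a degree 1
derivation `d` with `d² = 0`, a central curvature `θ ∈ A²`, a ℂ-antilinear involution
`*`, a trace `τ : A² → ℂ` (extended by `0` to all of `A`), a Kähler element `ω ∈ A²`
with inverse Lefschetz operator `Λ` (extended by `0` on `A⁰ ⊕ A¹`), positive definite
Hermitian forms on each graded piece, and the Yang–Mills condition `d(Λθ) = 0`. -/
structure LozengeAlgebra (A : Type*) [Ring A] [Algebra ℂ A] where
  A0 : Submodule ℂ A
  A10 : Submodule ℂ A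
  A01 : Submodule ℂ A
  A2 : Submodule ℂ A
  p0 : A →ₗ[ℂ] A
  p10 : A →ₗ[ℂ] A
  p01 : A →ₗ[ℂ] A
  p2 : A →ₗ[ℂ] A
  d : A →ₗ[ℂ] A
  Lam : A →ₗ[ℂ] A
  st : A → A
  tau : A →ₗ[ℂ] ℂ
  theta : A
  omega : A
  -- the projections realize the direct sum decomposition A = A⁰ ⊕ A^{1,0} ⊕ A^{0,1} ⊕ A²
  p0_mem : ∀ x : A, p0 x ∈ A0
  p10_mem : ∀ x : A, p10 x ∈ A10
  p01_mem : ∀ x : A, p01 x ∈ A01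
  p2_mem : ∀ x : A, p2 x ∈ A2
  decomp : ∀ x : A, p0 x + p10 x + p01 x + p2 x = x
  proj_eq : ∀ x0 ∈ A0, ∀ x10 ∈ A10, ∀ x01 ∈ A01, ∀ x2 ∈ A2,
    p0 (x0 + x10 + x01 + x2) = x0 ∧ p10 (x0 + x10 + x01 + x2) = x10 ∧
    p01 (x0 + x10 + x01 + x2) = x01 ∧ p2 (x0 + x10 + x01 + x2) = x2
  -- multiplicative grading
  one_mem : (1 : A) ∈ A0
  mul00 : ∀ a ∈ A0, ∀ b ∈ A0, a * b ∈ A0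
  mul0_10 : ∀ a ∈ A0, ∀ b ∈ A10, a * b ∈ A10 ∧ b * a ∈ A10
  mul0_01 : ∀ a ∈ A0, ∀ b ∈ A01, a * b ∈ A01 ∧ b * a ∈ A01
  mul0_2 : ∀ a ∈ A0, ∀ b ∈ A2, a * b ∈ A2 ∧ b * a ∈ A2
  mul10_10 : ∀ a ∈ A10, ∀ b ∈ A10, a * b = 0
  mul10_01 : ∀ a ∈ A10, ∀ b ∈ A01, a * b ∈ A2 ∧ b * a ∈ A2
  mul01_01 : ∀ a ∈ A01, ∀ b ∈ A01, a * b ∈ A2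
  mul1_2 : ∀ a : A, (a ∈ A10 ∨ a ∈ A01) → ∀ b ∈ A2, a * b = 0 ∧ b * a = 0
  mul2_2 : ∀ a ∈ A2, ∀ b ∈ A2, a * b = 0
  -- the differential
  d0_mem : ∀ x ∈ A0, p10 (d x) + p01 (d x) = d x
  d10_mem : ∀ x ∈ A10, d x ∈ A2
  d01_mem : ∀ x ∈ A01, d x ∈ A2
  d2_zero : ∀ x ∈ A2, d x = 0
  d_sq : ∀ x : A, d (d x) = 0
  leibniz0 : ∀ a ∈ A0, ∀ b : A, d (a * b) = d a * b + a * d b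
  leibniz1 : ∀ a : A, (a ∈ A10 ∨ a ∈ A01) → ∀ b : A, d (a * b) = d a * b - a * d b
  leibniz2 : ∀ a ∈ A2, ∀ b : A, d (a * b) = d a * b + a * d b
  -- the curvature
  theta_mem : theta ∈ A2
  theta_central : ∀ a : A, theta * a = a * theta
  -- the ℂ-antilinear involution
  st_add : ∀ x y : A, st (x + y) = st x + st y
  st_smul : ∀ (c : ℂ) (x : A), st (c • x) = (starRingEnd ℂ c) • st x
  st_invol : ∀ x : A, st (st x) = x
  st_one : st 1 = 1
  st_mem0 : ∀ x ∈ A0, st x ∈ A0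
  st_mem10 : ∀ x ∈ A10, st x ∈ A01
  st_mem01 : ∀ x ∈ A01, st x ∈ A10
  st_mem2 : ∀ x ∈ A2, st x ∈ A2
  st_mul0 : ∀ a ∈ A0, ∀ b : A, st (a * b) = st b * st a ∧ st (b * a) = st a * st b
  st_mul1 : ∀ a b : A, (a ∈ A10 ∨ a ∈ A01) → (b ∈ A10 ∨ b ∈ A01) →
    st (a * b) = -(st b * st a)
  st_d : ∀ x : A, st (d x) = d (st x)
  st_theta : st theta = -theta
  -- the trace
  tau_zero0 : ∀ x ∈ A0, tau x = 0
  tau_zero10 : ∀ x ∈ A10, tau x = 0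
  tau_zero01 : ∀ x ∈ A01, tau x = 0
  tau_comm0 : ∀ a ∈ A0, ∀ b : A, tau (a * b) = tau (b * a)
  tau_anticomm1 : ∀ a b : A, (a ∈ A10 ∨ a ∈ A01) → (b ∈ A10 ∨ b ∈ A01) →
    tau (a * b) = -tau (b * a)
  tau_d : ∀ x : A, tau (d x) = 0
  tau_star : ∀ x ∈ A2, tau (st x) = starRingEnd ℂ (tau x)
  -- the Kähler element and the Lefschetz operators
  omega_mem : omega ∈ A2
  omega_st : st omega = omega
  omega_comm : ∀ a ∈ A0, omega * a = a * omega
  Lam_mem : ∀ x : A, Lam x ∈ A0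
  Lam_zero0 : ∀ x ∈ A0, Lam x = 0
  Lam_zero10 : ∀ x ∈ A10, Lam x = 0
  Lam_zero01 : ∀ x ∈ A01, Lam x = 0
  Lam_left_inv : ∀ a ∈ A0, Lam (omega * a) = a
  Lam_right_inv : ∀ b ∈ A2, omega * Lam b = b
  -- positive definiteness of the four Hermitian forms
  pos0 : ∀ a ∈ A0, a ≠ 0 →
    0 < (tau (omega * (st a * a))).re ∧ (tau (omega * (st a * a))).im = 0
  pos10 : ∀ a ∈ A10, a ≠ 0 →
    0 < (-Complex.I * tau (st a * a)).re ∧ (-Complex.I * tau (st a * a)).im = 0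
  pos01 : ∀ a ∈ A01, a ≠ 0 →
    0 < (Complex.I * tau (st a * a)).re ∧ (Complex.I * tau (st a * a)).im = 0
  pos2 : ∀ a ∈ A2, a ≠ 0 →
    0 < (tau (omega * (st (Lam a) * Lam a))).re ∧
      (tau (omega * (st (Lam a) * Lam a))).im = 0
  -- the Yang–Mills condition
  ym : d (Lam theta) = 0

namespace LozengeAlgebra

variable {A : Type*} [Ring A] [Algebra ℂ A] (Lz : LozengeAlgebra A)

/-- The operator `∂` (the `A^{1,0}`-component of `d` on `A⁰`, and `d` on `A^{0,1}`). -/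
def del (x : A) : A := Lz.p10 (Lz.d (Lz.p0 x)) + Lz.d (Lz.p01 x)

/-- The operator `∂̄` (the `A^{0,1}`-component of `d` on `A⁰`, and `d` on `A^{1,0}`). -/
def delbar (x : A) : A := Lz.p01 (Lz.d (Lz.p0 x)) + Lz.d (Lz.p10 x)

/-- The total inner product on `A = A⁰ ⊕ A^{1,0} ⊕ A^{0,1} ⊕ A²`, the orthogonal sum of
the Hermitian forms `τ(ω a* b)` on `A⁰`, `−iτ(a* b)` on `A^{1,0}`, `iτ(a* b)` on
`A^{0,1}`, and `τ(ω Λ(a)* Λ(b))` on `A²`. -/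
noncomputable def innerL (u v : A) : ℂ :=
  Lz.tau (Lz.omega * (Lz.st (Lz.p0 u) * Lz.p0 v))
    + (-Complex.I) * Lz.tau (Lz.st (Lz.p10 u) * Lz.p10 v)
    + Complex.I * Lz.tau (Lz.st (Lz.p01 u) * Lz.p01 v)
    + Lz.tau (Lz.omega * (Lz.st (Lz.Lam (Lz.p2 u)) * Lz.Lam (Lz.p2 v)))


/-! ### Auxiliary lemmas -/

lemma st_zero : Lz.st 0 = 0 := by
  have h := Lz.st_smul 0 0
  simpa using h

lemma proj_spec {x x0 x10 x01 x2 : A} (h : x = x0 + x10 + x01 + x2)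
    (h0 : x0 ∈ Lz.A0) (h10 : x10 ∈ Lz.A10) (h01 : x01 ∈ Lz.A01) (h2 : x2 ∈ Lz.A2) :
    Lz.p0 x = x0 ∧ Lz.p10 x = x10 ∧ Lz.p01 x = x01 ∧ Lz.p2 x = x2 := by
  rw [h]; exact Lz.proj_eq x0 h0 x10 h10 x01 h01 x2 h2

lemma projs0 {x : A} (h : x ∈ Lz.A0) :
    Lz.p0 x = x ∧ Lz.p10 x = 0 ∧ Lz.p01 x = 0 ∧ Lz.p2 x = 0 :=
  Lz.proj_spec (by simp) h (zero_mem _) (zero_mem _) (zero_mem _)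

lemma projs2 {x : A} (h : x ∈ Lz.A2) :
    Lz.p0 x = 0 ∧ Lz.p10 x = 0 ∧ Lz.p01 x = 0 ∧ Lz.p2 x = x :=
  Lz.proj_spec (by simp) (zero_mem _) (zero_mem _) (zero_mem _) h

lemma mul01_01_zero {x y : A} (hx : x ∈ Lz.A01) (hy : y ∈ Lz.A01) : x * y = 0 := by
  have h1 : Lz.st (x * y) = 0 := by
    rw [Lz.st_mul1 x y (Or.inr hx) (Or.inr hy),
      Lz.mul10_10 _ (Lz.st_mem01 y hy) _ (Lz.st_mem01 x hx), neg_zero]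
  have h2 := congrArg Lz.st h1
  rwa [Lz.st_invol, Lz.st_zero] at h2

lemma d_one : Lz.d 1 = 0 := by
  have h := Lz.leibniz0 1 Lz.one_mem 1
  rw [mul_one, one_mul, mul_one] at h
  have h2 : Lz.d 1 + 0 = Lz.d 1 + Lz.d 1 := by rw [add_zero, ← h]
  exact (add_left_cancel h2).symm

lemma dproj (x : A) :
    Lz.p0 (Lz.d x) = 0 ∧ Lz.p10 (Lz.d x) = Lz.p10 (Lz.d (Lz.p0 x)) ∧
    Lz.p01 (Lz.d x) = Lz.p01 (Lz.d (Lz.p0 x)) ∧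
    Lz.p2 (Lz.d x) = Lz.d (Lz.p10 x) + Lz.d (Lz.p01 x) := by
  have hsum : Lz.d (Lz.p0 x) = Lz.p10 (Lz.d (Lz.p0 x)) + Lz.p01 (Lz.d (Lz.p0 x)) :=
    (Lz.d0_mem _ (Lz.p0_mem x)).symm
  have hd : Lz.d x = 0 + Lz.p10 (Lz.d (Lz.p0 x)) + Lz.p01 (Lz.d (Lz.p0 x))
      + (Lz.d (Lz.p10 x) + Lz.d (Lz.p01 x)) := by
    conv_lhs => rw [← Lz.decomp x, map_add, map_add, map_add,
      Lz.d2_zero _ (Lz.p2_mem x), hsum]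
    abel
  exact Lz.proj_spec hd (zero_mem _) (Lz.p10_mem _) (Lz.p01_mem _)
    (add_mem (Lz.d10_mem _ (Lz.p10_mem x)) (Lz.d01_mem _ (Lz.p01_mem x)))

lemma innerL_zero_left (v : A) : Lz.innerL 0 v = 0 := by
  simp [innerL, Lz.st_zero]

lemma innerL_zero_right (u : A) : Lz.innerL u 0 = 0 := by
  simp [innerL]

lemma innerL_sub_right (u v w : A) :
    Lz.innerL u (v - w) = Lz.innerL u v - Lz.innerL u w := by
  simp only [innerL, map_sub, mul_sub]
  ring

lemma inner_self_eq_zero {x : A} (h : Lz.innerL x x = 0) : x = 0 := by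
  have key : ∀ (t : ℂ) (y : A), (y ≠ 0 → 0 < t.re ∧ t.im = 0) → (y = 0 → t = 0) →
      0 ≤ t.re ∧ (t.re ≤ 0 → y = 0) := by
    intro t y h1 h2
    rcases eq_or_ne y 0 with hy | hy
    · simp [h2 hy, hy]
    · exact ⟨le_of_lt (h1 hy).1, fun hre => absurd (h1 hy).1 (not_lt.mpr hre)⟩
  have k0 := key (Lz.tau (Lz.omega * (Lz.st (Lz.p0 x) * Lz.p0 x))) (Lz.p0 x)
    (fun hne => Lz.pos0 _ (Lz.p0_mem x) hne) (fun he => by simp [he, Lz.st_zero])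
  have k10 := key ((-Complex.I) * Lz.tau (Lz.st (Lz.p10 x) * Lz.p10 x)) (Lz.p10 x)
    (fun hne => Lz.pos10 _ (Lz.p10_mem x) hne) (fun he => by simp [he])
  have k01 := key (Complex.I * Lz.tau (Lz.st (Lz.p01 x) * Lz.p01 x)) (Lz.p01 x)
    (fun hne => Lz.pos01 _ (Lz.p01_mem x) hne) (fun he => by simp [he])
  have k2 := key (Lz.tau (Lz.omega * (Lz.st (Lz.Lam (Lz.p2 x)) * Lz.Lam (Lz.p2 x)))) (Lz.p2 x)
    (fun hne => Lz.pos2 _ (Lz.p2_mem x) hne) (fun he => by simp [he, Lz.st_zero])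
  have hre := congrArg Complex.re h
  simp only [innerL, Complex.add_re, Complex.zero_re] at hre
  have e0 := k0.2 (by linarith [k10.1, k01.1, k2.1])
  have e10 := k10.2 (by linarith [k0.1, k01.1, k2.1])
  have e01 := k01.2 (by linarith [k0.1, k10.1, k2.1])
  have e2 := k2.2 (by linarith [k0.1, k10.1, k01.1])
  have hdec := Lz.decomp x
  rw [e0, e10, e01, e2] at hdec
  simpa using hdec.symm

lemma adj_eq (T S : A → A) (hS : ∀ u v, Lz.innerL (T u) v = Lz.innerL u (S v))
    (b y : A) (h : ∀ u, Lz.innerL (T u) b = Lz.innerL u y) : S b = y := by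
  have hz : Lz.innerL (S b - y) (S b - y) = 0 := by
    rw [Lz.innerL_sub_right, ← hS, h, sub_self]
  exact sub_eq_zero.mp (Lz.inner_self_eq_zero hz)

lemma adjd_A0 (S : A → A) (hS : ∀ u v, Lz.innerL (Lz.d u) v = Lz.innerL u (S v))
    {a : A} (ha : a ∈ Lz.A0) : S a = 0 := by
  apply Lz.adj_eq _ S hS
  intro u
  obtain ⟨e0, e10, e01, e2⟩ := Lz.projs0 ha
  simp [innerL, e0, e10, e01, e2, (Lz.dproj u).1, Lz.st_zero]

lemma harmonic_iff (S : A → A) (hS : ∀ u v, Lz.innerL (Lz.d u) v = Lz.innerL u (S v))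
    (x : A) : Lz.d (S x) + S (Lz.d x) = 0 ↔ Lz.d x = 0 ∧ S x = 0 := by
  constructor
  · intro h
    have hneg : S (Lz.d x) = -Lz.d (S x) := by
      rw [eq_neg_iff_add_eq_zero, add_comm]; exact h
    have h1 : S (Lz.d x) = 0 := by
      have hz : Lz.d (S (Lz.d x)) = 0 := by rw [hneg, map_neg, Lz.d_sq, neg_zero]
      have e := hS (S (Lz.d x)) (Lz.d x)
      rw [hz, Lz.innerL_zero_left] at e
      exact Lz.inner_self_eq_zero e.symm
    have h2 : Lz.d x = 0 := by
      have e := hS x (Lz.d x)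
      rw [h1, Lz.innerL_zero_right] at e
      exact Lz.inner_self_eq_zero e
    refine ⟨h2, ?_⟩
    have hds : Lz.d (S x) = 0 := by rwa [h1, add_zero] at h
    have e := hS (S x) x
    rw [hds, Lz.innerL_zero_left] at e
    exact Lz.inner_self_eq_zero e.symm
  · rintro ⟨h1, h2⟩
    have hS0 : S 0 = 0 := Lz.adjd_A0 S hS (zero_mem _)
    rw [h1, h2, map_zero, hS0, add_zero]

lemma tau_d_mul {z : A} (hz : z ∈ Lz.A10 ∨ z ∈ Lz.A01) (u : A) :
    Lz.tau (Lz.d z * u) = Lz.tau (z * Lz.d u) := by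
  have h : Lz.d z * u = Lz.d (z * u) + z * Lz.d u := by
    rw [Lz.leibniz1 z hz u, sub_add_cancel]
  rw [h, map_add, Lz.tau_d, zero_add]

lemma innerL_A2_right {b : A} (hb : b ∈ Lz.A2) (u : A) :
    Lz.innerL u b = Lz.tau (Lz.omega * (Lz.st (Lz.Lam (Lz.p2 u)) * Lz.Lam b)) := by
  obtain ⟨e0, e10, e01, e2⟩ := Lz.projs2 hb
  simp [innerL, e0, e10, e01, e2]

lemma innerL_A01_right {y : A} (hy : y ∈ Lz.A01) (u : A) :
    Lz.innerL u y = Complex.I * Lz.tau (Lz.st (Lz.p01 u) * y) := by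
  obtain ⟨e0, e10, e01, e2⟩ := Lz.proj_spec (x := y) (by simp) (zero_mem _) (zero_mem _) hy (zero_mem _)
  simp [innerL, e0, e10, e01, e2]

lemma omega_st_Lam {y : A} (hy : y ∈ Lz.A2) (w : A) :
    Lz.omega * (Lz.st (Lz.Lam y) * w) = Lz.st y * w := by
  have hA0 : Lz.Lam y ∈ Lz.A0 := Lz.Lam_mem _
  have e : Lz.st (Lz.Lam y) * Lz.omega = Lz.st y := by
    calc Lz.st (Lz.Lam y) * Lz.omega
        = Lz.st (Lz.Lam y) * Lz.st Lz.omega := by rw [Lz.omega_st]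
      _ = Lz.st (Lz.omega * Lz.Lam y) := ((Lz.st_mul0 _ hA0 Lz.omega).2).symm
      _ = Lz.st y := by rw [Lz.Lam_right_inv _ hy]
  rw [← mul_assoc, Lz.omega_comm _ (Lz.st_mem0 _ hA0), e]

lemma key_pair (c : A) {b : A} (hb : b ∈ Lz.A2) :
    Lz.innerL (Lz.d c) b
      = Lz.tau (Lz.st (Lz.p10 c) * Lz.d (Lz.Lam b))
        + Lz.tau (Lz.st (Lz.p01 c) * Lz.d (Lz.Lam b)) := by
  have hdz2 : Lz.d (Lz.p10 c) + Lz.d (Lz.p01 c) ∈ Lz.A2 :=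
    add_mem (Lz.d10_mem _ (Lz.p10_mem c)) (Lz.d01_mem _ (Lz.p01_mem c))
  rw [Lz.innerL_A2_right hb, (Lz.dproj c).2.2.2, Lz.omega_st_Lam hdz2]
  have e2 : Lz.st (Lz.d (Lz.p10 c) + Lz.d (Lz.p01 c))
      = Lz.d (Lz.st (Lz.p10 c)) + Lz.d (Lz.st (Lz.p01 c)) := by
    rw [Lz.st_add, Lz.st_d, Lz.st_d]
  rw [e2, add_mul, map_add,
    Lz.tau_d_mul (Or.inr (Lz.st_mem10 _ (Lz.p10_mem c))),
    Lz.tau_d_mul (Or.inl (Lz.st_mem01 _ (Lz.p01_mem c)))]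

lemma key_pair_del (u : A) {b : A} (hb : b ∈ Lz.A2) :
    Lz.innerL (Lz.del u) b = Lz.tau (Lz.st (Lz.p01 u) * Lz.d (Lz.Lam b)) := by
  have hd2 : Lz.d (Lz.p01 u) ∈ Lz.A2 := Lz.d01_mem _ (Lz.p01_mem u)
  have hdel : Lz.del u = 0 + Lz.p10 (Lz.d (Lz.p0 u)) + 0 + Lz.d (Lz.p01 u) := by
    simp [del]
  have hp := Lz.proj_spec hdel (zero_mem _) (Lz.p10_mem _) (zero_mem _) hd2
  rw [Lz.innerL_A2_right hb, hp.2.2.2, Lz.omega_st_Lam hd2, Lz.st_d,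
    Lz.tau_d_mul (Or.inl (Lz.st_mem01 _ (Lz.p01_mem u)))]

lemma Lam_mul_left {a b : A} (ha : a ∈ Lz.A0) (hb : b ∈ Lz.A2) :
    Lz.Lam (a * b) = a * Lz.Lam b := by
  have h : a * b = Lz.omega * (a * Lz.Lam b) := by
    conv_lhs => rw [← Lz.Lam_right_inv b hb]
    rw [← mul_assoc, ← Lz.omega_comm a ha, mul_assoc]
  rw [h, Lz.Lam_left_inv _ (Lz.mul00 a ha _ (Lz.Lam_mem b))]

lemma Lam_mul_right {a b : A} (ha : a ∈ Lz.A0) (hb : b ∈ Lz.A2) :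
    Lz.Lam (b * a) = Lz.Lam b * a := by
  have h : b * a = Lz.omega * (Lz.Lam b * a) := by
    conv_lhs => rw [← Lz.Lam_right_inv b hb]
    rw [mul_assoc]
  rw [h, Lz.Lam_left_inv _ (Lz.mul00 _ (Lz.Lam_mem b) a ha)]

lemma tau_rot {a : A} (ha : a ∈ Lz.A0) (x y : A) :
    Lz.tau (x * (y * a)) = Lz.tau ((a * x) * y) := by
  rw [← mul_assoc, ← Lz.tau_comm0 a ha, ← mul_assoc]

lemma dS_mul_left (S : A → A) (hS : ∀ u v, Lz.innerL (Lz.d u) v = Lz.innerL u (S v))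
    {a b : A} (ha : a ∈ Lz.A0) (hda : Lz.d a = 0) (hb : b ∈ Lz.A2) (hdb : S b = 0) :
    S (a * b) = 0 := by
  have hstaA0 : Lz.st a ∈ Lz.A0 := Lz.st_mem0 a ha
  have hdLab : Lz.d (Lz.Lam (a * b)) = a * Lz.d (Lz.Lam b) := by
    rw [Lz.Lam_mul_left ha hb, Lz.leibniz0 a ha, hda, zero_mul, zero_add]
  apply Lz.adj_eq _ S hS
  intro c
  rw [Lz.innerL_zero_right, Lz.key_pair c (Lz.mul0_2 a ha b hb).1, hdLab]
  have h0 : Lz.innerL (Lz.d (Lz.st a * Lz.p10 c + Lz.st a * Lz.p01 c)) b = 0 := by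
    rw [hS, hdb, Lz.innerL_zero_right]
  rw [Lz.key_pair _ hb] at h0
  have hw := Lz.proj_spec (x := Lz.st a * Lz.p10 c + Lz.st a * Lz.p01 c) (by abel)
    (zero_mem _) ((Lz.mul0_10 _ hstaA0 _ (Lz.p10_mem c)).1)
    ((Lz.mul0_01 _ hstaA0 _ (Lz.p01_mem c)).1) (zero_mem _)
  rw [hw.2.1, hw.2.2.1, (Lz.st_mul0 _ hstaA0 (Lz.p10 c)).1,
    (Lz.st_mul0 _ hstaA0 (Lz.p01 c)).1, Lz.st_invol] at h0
  rw [← mul_assoc, ← mul_assoc]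
  exact h0

lemma dS_mul_right (S : A → A) (hS : ∀ u v, Lz.innerL (Lz.d u) v = Lz.innerL u (S v))
    {a b : A} (ha : a ∈ Lz.A0) (hda : Lz.d a = 0) (hb : b ∈ Lz.A2) (hdb : S b = 0) :
    S (b * a) = 0 := by
  have hstaA0 : Lz.st a ∈ Lz.A0 := Lz.st_mem0 a ha
  have hdLba : Lz.d (Lz.Lam (b * a)) = Lz.d (Lz.Lam b) * a := by
    rw [Lz.Lam_mul_right ha hb, Lz.leibniz0 _ (Lz.Lam_mem b), hda, mul_zero, add_zero]
  apply Lz.adj_eq _ S hS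
  intro c
  rw [Lz.innerL_zero_right, Lz.key_pair c (Lz.mul0_2 a ha b hb).2, hdLba]
  have h0 : Lz.innerL (Lz.d (Lz.p10 c * Lz.st a + Lz.p01 c * Lz.st a)) b = 0 := by
    rw [hS, hdb, Lz.innerL_zero_right]
  rw [Lz.key_pair _ hb] at h0
  have hw := Lz.proj_spec (x := Lz.p10 c * Lz.st a + Lz.p01 c * Lz.st a) (by abel)
    (zero_mem _) ((Lz.mul0_10 _ hstaA0 _ (Lz.p10_mem c)).2)
    ((Lz.mul0_01 _ hstaA0 _ (Lz.p01_mem c)).2) (zero_mem _)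
  rw [hw.2.1, hw.2.2.1, (Lz.st_mul0 _ hstaA0 (Lz.p10 c)).2,
    (Lz.st_mul0 _ hstaA0 (Lz.p01 c)).2, Lz.st_invol] at h0
  rw [Lz.tau_rot ha, Lz.tau_rot ha]
  exact h0

lemma delS_formula (S : A → A) (hS : ∀ u v, Lz.innerL (Lz.del u) v = Lz.innerL u (S v))
    {b : A} (hb : b ∈ Lz.A2) :
    S b = (-Complex.I) • Lz.p01 (Lz.d (Lz.Lam b)) := by
  apply Lz.adj_eq _ S hS
  intro u
  have hy : (-Complex.I) • Lz.p01 (Lz.d (Lz.Lam b)) ∈ Lz.A01 :=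
    Submodule.smul_mem _ _ (Lz.p01_mem _)
  rw [Lz.key_pair_del u hb, Lz.innerL_A01_right hy u, mul_smul_comm, map_smul, smul_eq_mul]
  have hsplit : Lz.d (Lz.Lam b)
      = Lz.p10 (Lz.d (Lz.Lam b)) + Lz.p01 (Lz.d (Lz.Lam b)) :=
    (Lz.d0_mem _ (Lz.Lam_mem b)).symm
  conv_lhs => rw [hsplit]
  rw [mul_add, map_add,
    Lz.mul10_10 _ (Lz.st_mem01 _ (Lz.p01_mem u)) _ (Lz.p10_mem _), map_zero, zero_add]
  have hI : Complex.I * -Complex.I = 1 := by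
    simp [Complex.I_mul_I]
  rw [← mul_assoc, hI, one_mul]

lemma dLam_zero (S : A → A) (hS : ∀ u v, Lz.innerL (Lz.d u) v = Lz.innerL u (S v))
    {b : A} (hb : b ∈ Lz.A2) (hdb : S b = 0) : Lz.d (Lz.Lam b) = 0 := by
  have hy10 : Lz.p10 (Lz.d (Lz.Lam b)) ∈ Lz.A10 := Lz.p10_mem _
  have hy01 : Lz.p01 (Lz.d (Lz.Lam b)) ∈ Lz.A01 := Lz.p01_mem _
  have hsum : Lz.p10 (Lz.d (Lz.Lam b)) + Lz.p01 (Lz.d (Lz.Lam b)) = Lz.d (Lz.Lam b) :=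
    Lz.d0_mem _ (Lz.Lam_mem b)
  have h0 : Lz.innerL
      (Lz.d (Complex.I • Lz.p10 (Lz.d (Lz.Lam b)) + (-Complex.I) • Lz.p01 (Lz.d (Lz.Lam b)))) b
      = 0 := by
    rw [hS, hdb, Lz.innerL_zero_right]
  rw [Lz.key_pair _ hb] at h0
  have hpc := Lz.proj_spec
    (x := Complex.I • Lz.p10 (Lz.d (Lz.Lam b)) + (-Complex.I) • Lz.p01 (Lz.d (Lz.Lam b)))
    (by abel) (zero_mem _) (Submodule.smul_mem _ _ hy10) (Submodule.smul_mem _ _ hy01)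
    (zero_mem _)
  rw [hpc.2.1, hpc.2.2.1, Lz.st_smul, Lz.st_smul, smul_mul_assoc, smul_mul_assoc,
    map_smul, map_smul] at h0
  have m1 : Lz.st (Lz.p10 (Lz.d (Lz.Lam b))) * Lz.d (Lz.Lam b)
      = Lz.st (Lz.p10 (Lz.d (Lz.Lam b))) * Lz.p10 (Lz.d (Lz.Lam b)) := by
    nth_rewrite 2 [← hsum]
    rw [mul_add, Lz.mul01_01_zero (Lz.st_mem10 _ hy10) hy01, add_zero]
  have m2 : Lz.st (Lz.p01 (Lz.d (Lz.Lam b))) * Lz.d (Lz.Lam b)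
      = Lz.st (Lz.p01 (Lz.d (Lz.Lam b))) * Lz.p01 (Lz.d (Lz.Lam b)) := by
    nth_rewrite 2 [← hsum]
    rw [mul_add, Lz.mul10_10 _ (Lz.st_mem01 _ hy01) _ hy10, zero_add]
  rw [m1, m2] at h0
  simp only [map_neg, Complex.conj_I, smul_eq_mul, neg_neg] at h0
  have hpd := Lz.proj_spec (x := Lz.d (Lz.Lam b))
    (x0 := 0) (x10 := Lz.p10 (Lz.d (Lz.Lam b))) (x01 := Lz.p01 (Lz.d (Lz.Lam b))) (x2 := 0)
    (by nth_rewrite 1 [← hsum]; abel) (zero_mem _) hy10 hy01 (zero_mem _)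
  have hin : Lz.innerL (Lz.d (Lz.Lam b)) (Lz.d (Lz.Lam b)) = 0 := by
    simp only [innerL, hpd.1, hpd.2.1, hpd.2.2.1, hpd.2.2.2, Lz.st_zero, map_zero,
      zero_mul, mul_zero, zero_add, add_zero]
    linear_combination h0
  exact Lz.inner_self_eq_zero hin


end LozengeAlgebra

open LozengeAlgebra in
/-- in a finite-dimensional lozenge algebra with Laplacian `Δ = dd* + d*d`
and harmonic elements `𝓗 = Ker Δ`, the space `𝓗⁰ = 𝓗 ∩ A⁰` is a unital subalgebra of
`A⁰`, and `𝓗² = 𝓗 ∩ A²` is an `𝓗⁰`-sub-bimodule: if `a ∈ A⁰` and `b ∈ A²` are harmonic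
then so are `ab` and `ba`, and `∂*(ab) = a·∂*(b)`.  Moreover `L(a) = ωa` and `Λ`
restrict to mutually inverse bijections between `𝓗⁰` and `𝓗²`. -/
theorem lozenge_harmonic_part
    (A : Type*) [Ring A] [Algebra ℂ A] [FiniteDimensional ℂ A]
    (Lz : LozengeAlgebra A)
    (dS delS : A → A)
    (hdS : ∀ u v : A, Lz.innerL (Lz.d u) v = Lz.innerL u (dS v))
    (hdelS : ∀ u v : A, Lz.innerL (Lz.del u) v = Lz.innerL u (delS v)) :
    -- 𝓗⁰ is a unital subalgebra of A⁰
    (Lz.d (dS 1) + dS (Lz.d 1) = 0) ∧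
    (∀ a ∈ Lz.A0, ∀ b ∈ Lz.A0,
      Lz.d (dS a) + dS (Lz.d a) = 0 → Lz.d (dS b) + dS (Lz.d b) = 0 →
      Lz.d (dS (a * b)) + dS (Lz.d (a * b)) = 0) ∧
    -- 𝓗² is an 𝓗⁰-sub-bimodule of A², and ∂*(ab) = a·∂*(b)
    (∀ a ∈ Lz.A0, ∀ b ∈ Lz.A2,
      Lz.d (dS a) + dS (Lz.d a) = 0 → Lz.d (dS b) + dS (Lz.d b) = 0 →
      (Lz.d (dS (a * b)) + dS (Lz.d (a * b)) = 0) ∧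
      (Lz.d (dS (b * a)) + dS (Lz.d (b * a)) = 0) ∧
      delS (a * b) = a * delS b) ∧
    -- L and Λ restrict to mutually inverse bijections between 𝓗⁰ and 𝓗²
    (∀ a ∈ Lz.A0, Lz.d (dS a) + dS (Lz.d a) = 0 →
      (Lz.d (dS (Lz.omega * a)) + dS (Lz.d (Lz.omega * a)) = 0) ∧
      Lz.Lam (Lz.omega * a) = a) ∧
    (∀ b ∈ Lz.A2, Lz.d (dS b) + dS (Lz.d b) = 0 →
      (Lz.d (dS (Lz.Lam b)) + dS (Lz.d (Lz.Lam b)) = 0) ∧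
      Lz.omega * Lz.Lam b = b) := by
  have harm := Lz.harmonic_iff dS hdS
  have hd1 : Lz.d 1 = 0 := Lz.d_one
  have hdS0A : ∀ a ∈ Lz.A0, dS a = 0 := fun a ha => Lz.adjd_A0 dS hdS ha
  have hLw : Lz.Lam Lz.omega = 1 := by
    have h := Lz.Lam_left_inv 1 Lz.one_mem
    rwa [mul_one] at h
  have hdsw : dS Lz.omega = 0 := by
    apply Lz.adj_eq _ dS hdS
    intro c
    rw [Lz.innerL_zero_right, Lz.key_pair c Lz.omega_mem, hLw, hd1, mul_zero, mul_zero,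
      map_zero, add_zero]
  refine ⟨?_, ?_, ?_, ?_, ?_⟩
  · exact (harm 1).mpr ⟨hd1, hdS0A 1 Lz.one_mem⟩
  · intro a ha b hb hha hhb
    obtain ⟨hda, -⟩ := (harm a).mp hha
    obtain ⟨hdb, -⟩ := (harm b).mp hhb
    refine (harm _).mpr ⟨?_, hdS0A _ (Lz.mul00 a ha b hb)⟩
    rw [Lz.leibniz0 a ha b, hda, hdb, zero_mul, mul_zero, add_zero]
  · intro a ha b hb hha hhb
    obtain ⟨hda, -⟩ := (harm a).mp hha
    obtain ⟨-, hdb⟩ := (harm b).mp hhb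
    refine ⟨(harm _).mpr ⟨Lz.d2_zero _ (Lz.mul0_2 a ha b hb).1, Lz.dS_mul_left dS hdS ha hda hb hdb⟩,
      (harm _).mpr ⟨Lz.d2_zero _ (Lz.mul0_2 a ha b hb).2, Lz.dS_mul_right dS hdS ha hda hb hdb⟩, ?_⟩
    rw [Lz.delS_formula delS hdelS hb, Lz.delS_formula delS hdelS (Lz.mul0_2 a ha b hb).1]
    have hdLab : Lz.d (Lz.Lam (a * b)) = a * Lz.d (Lz.Lam b) := by
      rw [Lz.Lam_mul_left ha hb, Lz.leibniz0 a ha, hda, zero_mul, zero_add]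
    have hsplit : a * Lz.d (Lz.Lam b)
        = 0 + a * Lz.p10 (Lz.d (Lz.Lam b)) + a * Lz.p01 (Lz.d (Lz.Lam b)) + 0 := by
      conv_lhs => rw [← Lz.d0_mem _ (Lz.Lam_mem b)]
      rw [mul_add]
      abel
    have hp := Lz.proj_spec hsplit (zero_mem _)
      ((Lz.mul0_10 a ha _ (Lz.p10_mem _)).1) ((Lz.mul0_01 a ha _ (Lz.p01_mem _)).1)
      (zero_mem _)
    rw [hdLab, hp.2.2.1]
    exact (mul_smul_comm _ _ _).symm
  · intro a ha hha
    obtain ⟨hda, -⟩ := (harm a).mp hha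
    refine ⟨(harm _).mpr ⟨Lz.d2_zero _ (Lz.mul0_2 a ha _ Lz.omega_mem).2,
      Lz.dS_mul_right dS hdS ha hda Lz.omega_mem hdsw⟩, Lz.Lam_left_inv a ha⟩
  · intro b hb hhb
    obtain ⟨-, hdb⟩ := (harm b).mp hhb
    exact ⟨(harm _).mpr ⟨Lz.dLam_zero dS hdS hb hdb, hdS0A _ (Lz.Lam_mem b)⟩,
      Lz.Lam_right_inv b hb⟩
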